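/- Let w = a_1 a_2 ⋯ a_k (with k ≥ 1) be a nonempty word in which each letter a_s equals x_{r_s} or x_{r_s}^{-1} for some natural number r_s, and suppose that for every s < k either r_{s+1} = r_s + 1 or r_{s+1} = r_s − 1. Then w represents a nontrivial element of Thompson's group F. -/

import Mathlib

/-- The relators of Thompson's group `F` in its standard infinite presentation
`⟨x_0, x_1, x_2, … ∣ x_i⁻¹ x_j x_i = x_{j+1} for i < j⟩`. -/
def ThompsonRels : Set (FreeGroup ℕ) :=
  {r | ∃ i j : ℕ, i < j ∧
    r = (FreeGroup.of i)⁻¹ * FreeGroup.of j * FreeGroup.of i * (FreeGroup.of (j + 1))⁻¹}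

/-- Thompson's group `F`, as the presented group on the above relators. -/
abbrev ThompsonF : Type := PresentedGroup ThompsonRels

/-- The generator `x_k` of Thompson's group `F`. -/
def xF (k : ℕ) : ThompsonF := PresentedGroup.of k

namespace ThompsonAux


def ffun (i : ℕ) (t : ℚ) : ℚ :=
  if t ≤ (i:ℚ) - 1 then t else if t ≤ (i:ℚ) + 1 then (t + i - 1)/2 else t - 1

def fginv (i : ℕ) (t : ℚ) : ℚ :=
  if t ≤ (i:ℚ) - 1 then t else if t ≤ (i:ℚ) then 2*t - ((i:ℚ) - 1) else t + 1

def fperm (i : ℕ) : Equiv.Perm ℚ where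
  toFun := ffun i
  invFun := fginv i
  left_inv := by
    intro t; unfold ffun fginv; split_ifs <;> linarith
  right_inv := by
    intro t; unfold ffun fginv; split_ifs <;> linarith

lemma fperm_apply (i : ℕ) (t : ℚ) : fperm i t = ffun i t := rfl
lemma fperm_inv_apply (i : ℕ) (t : ℚ) : (fperm i)⁻¹ t = fginv i t := rfl

set_option maxHeartbeats 2000000 in
lemma frel {i j : ℕ} (h : i < j) :
    (fperm i)⁻¹ * fperm j * fperm i = fperm (j + 1) := by
  have hij : (i:ℚ) + 1 ≤ (j:ℚ) := by exact_mod_cast h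
  ext t
  simp only [Equiv.Perm.mul_apply, fperm_apply, fperm_inv_apply]
  unfold ffun fginv
  push_cast
  split_ifs <;> linarith



lemma myconj_zpow {G : Type*} [Group G] (x a : G) (e : ℤ) :
    (x⁻¹ * a * x) ^ e = x⁻¹ * a ^ e * x := by
  simpa using conj_zpow (a := x⁻¹) (b := a) (i := e)

lemma frel_zpow {i j : ℕ} (h : i < j) (e : ℤ) :
    (fperm i)⁻¹ * (fperm j) ^ e * fperm i = fperm (j + 1) ^ e := by
  rw [← frel h, myconj_zpow]

-- move a positive f_m from right to left past f_j^e  (j > m)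
lemma move_pos {m j : ℕ} (h : m < j) (e : ℤ) :
    fperm j ^ e * fperm m = fperm m * fperm (j + 1) ^ e := by
  have := frel_zpow h e
  calc fperm j ^ e * fperm m
      = fperm m * ((fperm m)⁻¹ * fperm j ^ e * fperm m) := by group
    _ = fperm m * fperm (j+1) ^ e := by rw [this]

lemma move_neg {m j : ℕ} (h : m < j) (e : ℤ) :
    (fperm m)⁻¹ * fperm j ^ e = fperm (j + 1) ^ e * (fperm m)⁻¹ := by
  have := frel_zpow h e
  calc (fperm m)⁻¹ * fperm j ^ e
      = ((fperm m)⁻¹ * fperm j ^ e * fperm m) * (fperm m)⁻¹ := by group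
    _ = fperm (j+1) ^ e * (fperm m)⁻¹ := by rw [this]

lemma move_pos_pow {m j : ℕ} (h : m < j) (e : ℤ) (a : ℕ) :
    fperm j ^ e * (fperm m) ^ a = (fperm m) ^ a * fperm (j + a) ^ e := by
  induction a generalizing j with
  | zero => simp
  | succ n ih =>
      have h1 : m < j := h
      calc fperm j ^ e * fperm m ^ (n+1)
          = (fperm j ^ e * fperm m) * fperm m ^ n := by rw [pow_succ']; group
        _ = fperm m * (fperm (j+1) ^ e * fperm m ^ n) := by rw [move_pos h]; group
        _ = fperm m * (fperm m ^ n * fperm (j+1+n) ^ e) := by rw [ih (Nat.lt_succ_of_lt h)]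
        _ = fperm m ^ (n+1) * fperm (j + (n+1)) ^ e := by
            rw [pow_succ']
            have : j + 1 + n = j + (n+1) := by omega
            rw [this]; group



abbrev Letter := ℕ × ℤ

noncomputable def Ψ (l : List Letter) : Equiv.Perm ℚ := (l.map fun x => fperm x.1 ^ x.2).prod

@[simp] lemma Ψ_nil : Ψ [] = 1 := rfl
@[simp] lemma Ψ_cons (x : Letter) (t : List Letter) :
    Ψ (x :: t) = fperm x.1 ^ x.2 * Ψ t := by simp [Ψ]

def shiftL (m : ℕ) (x : Letter) : Letter := if m < x.1 then (x.1 + 1, x.2) else x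

def posCnt (m : ℕ) (l : List Letter) : ℕ := l.countP fun x => x.1 = m ∧ x.2 = 1
def negCnt (m : ℕ) (l : List Letter) : ℕ := l.countP fun x => x.1 = m ∧ x.2 = -1

@[simp] lemma posCnt_nil (m : ℕ) : posCnt m [] = 0 := rfl
@[simp] lemma negCnt_nil (m : ℕ) : negCnt m [] = 0 := rfl
lemma posCnt_cons (m : ℕ) (x : Letter) (t : List Letter) :
    posCnt m (x :: t) = posCnt m t + (if x.1 = m ∧ x.2 = 1 then 1 else 0) := by
  simp [posCnt, List.countP_cons]
lemma negCnt_cons (m : ℕ) (x : Letter) (t : List Letter) :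
    negCnt m (x :: t) = negCnt m t + (if x.1 = m ∧ x.2 = -1 then 1 else 0) := by
  simp [negCnt, List.countP_cons]

def core (m : ℕ) : List Letter → List Letter
  | [] => []
  | x :: t =>
      if x.1 = m then
        (if x.2 = -1 then (core m t).map (shiftL m) else core m t)
      else (x.1 + posCnt m t, x.2) :: core m t

@[simp] lemma core_nil (m : ℕ) : core m [] = [] := rfl
lemma core_cons_posm {m : ℕ} {x : Letter} {t : List Letter} (h : x.1 = m) (h2 : x.2 ≠ -1) :
    core m (x :: t) = core m t := by simp [core, h, h2]
lemma core_cons_negm {m : ℕ} {x : Letter} {t : List Letter} (h : x.1 = m) (h2 : x.2 = -1) :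
    core m (x :: t) = (core m t).map (shiftL m) := by simp [core, h, h2]
lemma core_cons_ne {m : ℕ} {x : Letter} {t : List Letter} (h : x.1 ≠ m) :
    core m (x :: t) = (x.1 + posCnt m t, x.2) :: core m t := by simp [core, h]

lemma sweep_neg (m : ℕ) : ∀ (l : List Letter), (∀ x ∈ l, m ≤ x.1) →
    (fperm m)⁻¹ * Ψ l = Ψ (l.map (shiftL m)) * (fperm m)⁻¹ := by
  intro l
  induction l with
  | nil => simp
  | cons x t ih =>
      intro h
      have hx : m ≤ x.1 := h x (by simp)
      have ht : ∀ y ∈ t, m ≤ y.1 := fun y hy => h y (List.mem_cons_of_mem _ hy)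
      rcases eq_or_lt_of_le hx with heq | hlt
      · have hxs : shiftL m x = x := by simp [shiftL, ← heq]
        have comm : (fperm m)⁻¹ * fperm x.1 ^ x.2 = fperm x.1 ^ x.2 * (fperm m)⁻¹ := by
          rw [← heq]; exact ((Commute.refl (fperm m)).inv_left.zpow_right x.2).eq
        simp only [List.map_cons, Ψ_cons, hxs, ← mul_assoc, comm]
        rw [mul_assoc, ih ht, ← mul_assoc]
      · have hxs : shiftL m x = (x.1 + 1, x.2) := by simp [shiftL, hlt]
        simp only [List.map_cons, Ψ_cons, hxs, ← mul_assoc, move_neg hlt]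
        rw [mul_assoc, ih ht, ← mul_assoc]

lemma core_indices (m : ℕ) : ∀ (l : List Letter), (∀ x ∈ l, m ≤ x.1) →
    ∀ y ∈ core m l, m < y.1 := by
  intro l
  induction l with
  | nil => intro _ y hy; simp [core] at hy
  | cons x t ih =>
      intro h y hy
      have hx : m ≤ x.1 := h x (by simp)
      have ht : ∀ z ∈ t, m ≤ z.1 := fun z hz => h z (List.mem_cons_of_mem _ hz)
      by_cases hxm : x.1 = m
      · by_cases hneg : x.2 = -1
        · rw [core_cons_negm hxm hneg] at hy
          obtain ⟨z, hz, rfl⟩ := List.mem_map.mp hy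
          have := ih ht z hz
          unfold shiftL
          split <;> simp <;> omega
        · rw [core_cons_posm hxm hneg] at hy
          exact ih ht y hy
      · rw [core_cons_ne hxm] at hy
        rcases List.mem_cons.mp hy with hy | hy
        · subst hy; simp; omega
        · exact ih ht y hy

lemma alg (m : ℕ) : ∀ (l : List Letter),
    (∀ x ∈ l, m ≤ x.1 ∧ (x.2 = 1 ∨ x.2 = -1)) →
    Ψ l = (fperm m) ^ (posCnt m l) * Ψ (core m l) * ((fperm m) ^ (negCnt m l))⁻¹ := by
  intro l
  induction l with
  | nil => simp
  | cons x t ih =>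
      intro h
      obtain ⟨hx1, hx2⟩ := h x (by simp)
      have ht : ∀ y ∈ t, m ≤ y.1 ∧ (y.2 = 1 ∨ y.2 = -1) :=
        fun y hy => h y (List.mem_cons_of_mem _ hy)
      have ht1 : ∀ y ∈ t, m ≤ y.1 := fun y hy => (ht y hy).1
      have IH := ih ht
      by_cases hxm : x.1 = m
      · rcases hx2 with he | he
        · -- positive m-letter
          have hc : core m (x :: t) = core m t :=
            core_cons_posm hxm (by rw [he]; decide)
          have hp : posCnt m (x :: t) = posCnt m t + 1 := by
            simp [posCnt_cons, hxm, he]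
          have hn : negCnt m (x :: t) = negCnt m t := by
            simp [negCnt_cons, hxm, he]
          rw [Ψ_cons, IH, hc, hp, hn, hxm, he]
          simp [pow_succ', mul_assoc]
        · -- negative m-letter
          have hc : core m (x :: t) = (core m t).map (shiftL m) :=
            core_cons_negm hxm he
          have hp : posCnt m (x :: t) = posCnt m t := by
            simp [posCnt_cons, hxm, he]
          have hn : negCnt m (x :: t) = negCnt m t + 1 := by
            simp [negCnt_cons, hxm, he]
          have hcore_ge : ∀ y ∈ core m t, m ≤ y.1 :=
            fun y hy => (core_indices m t ht1 y hy).le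
          have comm : (fperm m)⁻¹ * fperm m ^ (posCnt m t) =
              fperm m ^ (posCnt m t) * (fperm m)⁻¹ :=
            ((Commute.refl (fperm m)).inv_left.pow_right _).eq
          rw [Ψ_cons, IH, hc, hp, hn, hxm, he]
          rw [zpow_neg_one, ← mul_assoc, ← mul_assoc, comm]
          rw [mul_assoc (fperm m ^ posCnt m t), sweep_neg m _ hcore_ge]
          rw [pow_succ]
          simp [mul_assoc]
      · -- non-m letter
        have hlt : m < x.1 := lt_of_le_of_ne hx1 (Ne.symm hxm)
        have hc : core m (x :: t) = (x.1 + posCnt m t, x.2) :: core m t :=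
          core_cons_ne hxm
        have hp : posCnt m (x :: t) = posCnt m t := by
          simp [posCnt_cons, hxm]
        have hn : negCnt m (x :: t) = negCnt m t := by
          simp [negCnt_cons, hxm]
        rw [Ψ_cons, IH, hc, hp, hn, ← mul_assoc, ← mul_assoc, move_pos_pow hlt]
        simp [mul_assoc]


def step (x y : Letter) : Prop := y.1 = x.1 + 1 ∨ y.1 + 1 = x.1

instance : DecidableRel step := fun x y => by unfold step; infer_instance

def base (m : ℕ) : List Letter → ℕ
  | [] => 0
  | x :: _ => if x.1 = m then (if x.2 = -1 then m + 2 else m) else x.1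

lemma chain_shift {m : ℕ} {l : List Letter} (h : ∀ x ∈ l, m < x.1)
    (hc : List.Chain' step l) : List.Chain' step (l.map (shiftL m)) := by
  have : l.map (shiftL m) = l.map (fun x => (x.1 + 1, x.2)) :=
    List.map_congr_left (fun x hx => by simp [shiftL, h x hx])
  rw [this]
  unfold List.Chain' at *
  rw [List.isChain_map]
  exact hc.imp (fun a b hab => by unfold step at *; omega)

lemma core_length (m : ℕ) : ∀ (l : List Letter),
    (∀ x ∈ l, x.2 = 1 ∨ x.2 = -1) →
    (core m l).length + posCnt m l + negCnt m l = l.length := by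
  intro l
  induction l with
  | nil => simp
  | cons x t ih =>
      intro h
      have hx := h x (by simp)
      have ht : ∀ y ∈ t, y.2 = 1 ∨ y.2 = -1 := fun y hy => h y (List.mem_cons_of_mem _ hy)
      have IH := ih ht
      by_cases hxm : x.1 = m
      · rcases hx with he | he
        · rw [core_cons_posm hxm (by rw [he]; decide), posCnt_cons, negCnt_cons]
          simp [hxm, he]; omega
        · rw [core_cons_negm hxm he, posCnt_cons, negCnt_cons]
          simp [hxm, he, List.length_map]; omega
      · rw [core_cons_ne hxm, posCnt_cons, negCnt_cons]
        simp [hxm]; omega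

lemma core_signs (m : ℕ) : ∀ (l : List Letter),
    (∀ x ∈ l, x.2 = 1 ∨ x.2 = -1) →
    ∀ y ∈ core m l, y.2 = 1 ∨ y.2 = -1 := by
  intro l
  induction l with
  | nil => simp
  | cons x t ih =>
      intro h y hy
      have hx := h x (by simp)
      have ht : ∀ z ∈ t, z.2 = 1 ∨ z.2 = -1 := fun z hz => h z (List.mem_cons_of_mem _ hz)
      by_cases hxm : x.1 = m
      · by_cases hneg : x.2 = -1
        · rw [core_cons_negm hxm hneg] at hy
          obtain ⟨z, hz, rfl⟩ := List.mem_map.mp hy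
          have := ih ht z hz
          unfold shiftL; split <;> simpa
        · rw [core_cons_posm hxm hneg] at hy
          exact ih ht y hy
      · rw [core_cons_ne hxm] at hy
        rcases List.mem_cons.mp hy with rfl | hy
        · simpa using hx
        · exact ih ht y hy

lemma core_chain (m : ℕ) : ∀ (l : List Letter),
    (∀ x ∈ l, m ≤ x.1 ∧ (x.2 = 1 ∨ x.2 = -1)) → List.Chain' step l →
    List.Chain' step (core m l) ∧
      ∀ y ∈ (core m l).head?, y.1 = base m l + posCnt m l := by
  intro l
  induction l with
  | nil => simp
  | cons x t ih =>
      intro h hc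
      obtain ⟨hx1, hx2⟩ := h x (by simp)
      have ht : ∀ y ∈ t, m ≤ y.1 ∧ (y.2 = 1 ∨ y.2 = -1) :=
        fun y hy => h y (List.mem_cons_of_mem _ hy)
      have ht1 : ∀ y ∈ t, m ≤ y.1 := fun y hy => (ht y hy).1
      obtain ⟨hstep_head, hct⟩ := List.isChain_cons.mp hc
      obtain ⟨ihc, ihh⟩ := ih ht hct
      -- auxiliary: if t is nonempty, its head has index `m+1` provided x.1 = m,
      -- or index x.1 ± 1 in general
      by_cases hxm : x.1 = m
      · -- head of t (if any) has index m + 1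
        have hthead : ∀ w ∈ t.head?, w.1 = m + 1 := by
          intro w hw
          have hs := hstep_head w hw
          have hwmem : w ∈ t := by
            cases t with
            | nil => simp at hw
            | cons a t' => simp at hw; subst hw; simp
          have := ht1 w hwmem
          unfold step at hs; omega
        have hbase_t : t ≠ [] → base m t = m + 1 := by
          intro hne
          cases t with
          | nil => simp at hne
          | cons w t' =>
              have : w.1 = m + 1 := hthead w (by simp)
              simp [base, this]
        rcases hx2 with he | he
        · -- (m, 1)
          have hcor : core m (x :: t) = core m t := core_cons_posm hxm (by rw [he]; decide)
          refine ⟨by rw [hcor]; exact ihc, ?_⟩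
          intro y hy
          rw [hcor] at hy
          have hy1 := ihh y hy
          have htne : t ≠ [] := by
            intro hteq; rw [hteq] at hy; simp at hy
          rw [hbase_t htne] at hy1
          have hpc : posCnt m (x :: t) = posCnt m t + 1 := by
            rw [posCnt_cons]; simp [hxm, he]
          have hb : base m (x :: t) = m := by simp [base, hxm, he]
          rw [hpc, hb]
          omega
        · -- (m, -1)
          have hcor : core m (x :: t) = (core m t).map (shiftL m) := core_cons_negm hxm he
          have hgt := core_indices m t ht1
          refine ⟨by rw [hcor]; exact chain_shift hgt ihc, ?_⟩
          intro y hy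
          rw [hcor, List.head?_map] at hy
          simp only [Option.mem_def, Option.map_eq_some_iff] at hy
          obtain ⟨z, hz, rfl⟩ := hy
          have hz1 := ihh z (Option.mem_def.mpr hz)
          have hzmem : z ∈ core m t := List.mem_of_mem_head? (Option.mem_def.mpr hz)
          have hzgt : m < z.1 := hgt z hzmem
          have htne : t ≠ [] := by
            intro hteq; rw [hteq] at hzmem; simp at hzmem
          rw [hbase_t htne] at hz1
          have hpc : posCnt m (x :: t) = posCnt m t := by
            rw [posCnt_cons]; simp [he]
          rw [hpc]
          simp only [shiftL, if_pos hzgt, base, hxm, he]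
          simp
          omega
      · -- x.1 > m
        have hlt : m < x.1 := lt_of_le_of_ne hx1 (Ne.symm hxm)
        have hcor : core m (x :: t) = (x.1 + posCnt m t, x.2) :: core m t := core_cons_ne hxm
        have hpc : posCnt m (x :: t) = posCnt m t := by
          rw [posCnt_cons]; simp [hxm]
        constructor
        · rw [hcor]
          unfold List.Chain'
          rw [List.isChain_cons]
          refine ⟨?_, ihc⟩
          intro y hy
          have hy1 := ihh y hy
          cases t with
          | nil => simp at hy
          | cons w t' =>
              have hsw : step x w := hstep_head w (by simp)
              have hw1 : m ≤ w.1 := ht1 w (by simp)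
              by_cases hwm : w.1 = m
              · have hx1w : x.1 = m + 1 := by
                  unfold step at hsw; omega
                rcases (ht w (by simp)).2 with hw2 | hw2
                · have hbw : base m (w :: t') = m := by
                    simp [base, hwm, hw2]
                  have hpw : posCnt m (w :: t') = posCnt m t' + 1 := by
                    rw [posCnt_cons]; simp [hwm, hw2]
                  rw [hbw] at hy1
                  unfold step
                  omega
                · have hbw : base m (w :: t') = m + 2 := by
                    simp [base, hwm, hw2]
                  have hpw : posCnt m (w :: t') = posCnt m t' := by
                    rw [posCnt_cons]; simp [hw2]
                  rw [hbw] at hy1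
                  unfold step
                  omega
              · have hbw : base m (w :: t') = w.1 := by simp [base, hwm]
                have hpw : posCnt m (w :: t') = posCnt m t' := by
                  rw [posCnt_cons]; simp [hwm]
                rw [hbw] at hy1
                unfold step at hsw ⊢
                omega
        · intro y hy
          rw [hcor] at hy
          simp at hy
          simp [base, hxm, hpc, ← hy]

def Ssum (m : ℕ) (l : List Letter) : ℤ := (l.map fun x => if x.1 = m then x.2 else 0).sum

@[simp] lemma Ssum_nil (m : ℕ) : Ssum m [] = 0 := rfl
lemma Ssum_cons (m : ℕ) (x : Letter) (t : List Letter) :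
    Ssum m (x :: t) = (if x.1 = m then x.2 else 0) + Ssum m t := by simp [Ssum]

lemma Ssum_bound (m : ℕ) : ∀ (l : List Letter), (∀ x ∈ l, x.2 = 1 ∨ x.2 = -1) →
    -(l.length : ℤ) ≤ Ssum m l ∧ Ssum m l ≤ l.length := by
  intro l
  induction l with
  | nil => simp
  | cons x t ih =>
      intro h
      have hx := h x (by simp)
      have ht := ih (fun y hy => h y (List.mem_cons_of_mem _ hy))
      rw [Ssum_cons]
      simp only [List.length_cons]
      have : (if x.1 = m then x.2 else 0) = 1 ∨ (if x.1 = m then x.2 else 0) = -1 ∨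
          (if x.1 = m then x.2 else 0) = 0 := by
        split
        · tauto
        · tauto
      push_cast
      omega

lemma germ (m : ℕ) : ∀ (l : List Letter),
    (∀ x ∈ l, m ≤ x.1 ∧ (x.2 = 1 ∨ x.2 = -1)) →
    ∀ e : ℤ, e + l.length ≤ 0 →
    Ψ l ((m:ℚ) - 1 + 2^e) = (m:ℚ) - 1 + 2^(e - Ssum m l) := by
  intro l
  induction l with
  | nil => simp
  | cons x t ih =>
      intro h e he
      obtain ⟨hx1, hx2⟩ := h x (by simp)
      have ht : ∀ y ∈ t, m ≤ y.1 ∧ (y.2 = 1 ∨ y.2 = -1) :=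
        fun y hy => h y (List.mem_cons_of_mem _ hy)
      have ht2 : ∀ y ∈ t, y.2 = 1 ∨ y.2 = -1 := fun y hy => (ht y hy).2
      have hlen : e + (t.length : ℤ) ≤ 0 := by
        simp only [List.length_cons] at he; push_cast at he ⊢; omega
      have IH := ih ht e hlen
      set e' : ℤ := e - Ssum m t with he'
      have hb := Ssum_bound m t ht2
      have he'le : e' ≤ -1 := by
        simp only [List.length_cons] at he; push_cast at he; omega
      have h2le : (2:ℚ) ^ e' ≤ 1/2 := by
        calc (2:ℚ) ^ e' ≤ 2 ^ (-1 : ℤ) := by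
              apply zpow_le_zpow_right₀ (by norm_num) he'le
          _ = 1/2 := by norm_num
      have h2pos : (0:ℚ) < 2 ^ e' := by positivity
      have happ : Ψ (x :: t) ((m:ℚ) - 1 + 2^e) = (fperm x.1 ^ x.2) ((m:ℚ) - 1 + 2^e') := by
        rw [Ψ_cons, Equiv.Perm.mul_apply, IH]
      rw [happ, Ssum_cons]
      by_cases hxm : x.1 = m
      · rcases hx2 with hs | hs
        · rw [hs, zpow_one, fperm_apply, ffun, hxm]
          rw [if_neg (by linarith), if_pos (by linarith)]
          have : ((m:ℚ) - 1 + 2^e' + m - 1)/2 = (m:ℚ) - 1 + 2^(e' - 1) := by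
            rw [zpow_sub_one₀ (by norm_num : (2:ℚ) ≠ 0)]
            ring
          have hE : e - (1 + Ssum m t) = e' - 1 := by omega
          rw [this, if_pos rfl, hE]
        · rw [hs, zpow_neg_one, fperm_inv_apply, fginv, hxm]
          rw [if_neg (by linarith), if_pos (by linarith)]
          have : 2*((m:ℚ) - 1 + 2^e') - ((m:ℚ) - 1) = (m:ℚ) - 1 + 2^(e' + 1) := by
            rw [zpow_add_one₀ (by norm_num : (2:ℚ) ≠ 0)]
            ring
          have hE : e - (-1 + Ssum m t) = e' + 1 := by omega
          rw [this, if_pos rfl, hE]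
      · have hgt : m < x.1 := lt_of_le_of_ne hx1 (Ne.symm hxm)
        have hgtq : (m:ℚ) + 1 ≤ (x.1:ℚ) := by exact_mod_cast hgt
        have hfix : ((m:ℚ) - 1 + 2^e') ≤ (x.1:ℚ) - 1 := by linarith
        rw [if_neg hxm]
        have : (fperm x.1 ^ x.2) ((m:ℚ) - 1 + 2^e') = (m:ℚ) - 1 + 2^e' := by
          rcases hx2 with hs | hs
          · rw [hs, zpow_one, fperm_apply, ffun, if_pos hfix]
          · rw [hs, zpow_neg_one, fperm_inv_apply, fginv, if_pos hfix]
        have hE : e - (0 + Ssum m t) = e' := by omega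
        rw [this, hE]

lemma Ssum_eq_counts (m : ℕ) : ∀ (l : List Letter),
    (∀ x ∈ l, x.2 = 1 ∨ x.2 = -1) →
    Ssum m l = (posCnt m l : ℤ) - (negCnt m l : ℤ) := by
  intro l
  induction l with
  | nil => simp [Ssum, posCnt, negCnt]
  | cons x t ih =>
      intro h
      have hx := h x (by simp)
      have IH := ih (fun y hy => h y (List.mem_cons_of_mem _ hy))
      simp only [Ssum, List.map_cons, List.sum_cons, posCnt, negCnt, List.countP_cons] at *
      by_cases hxm : x.1 = m
      · rcases hx with hs | hs <;> simp [hxm, hs] at * <;> push_cast <;> omega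
      · simp [hxm] at *; omega

lemma cnt_eq (m : ℕ) : ∀ (l : List Letter),
    (∀ x ∈ l, x.2 = 1 ∨ x.2 = -1) →
    posCnt m l + negCnt m l = l.countP (fun x => x.1 = m) := by
  intro l
  induction l with
  | nil => simp [posCnt, negCnt]
  | cons x t ih =>
      intro h
      have hx := h x (by simp)
      have IH := ih (fun y hy => h y (List.mem_cons_of_mem _ hy))
      simp only [posCnt, negCnt, List.countP_cons, Bool.decide_and] at *
      by_cases hxm : x.1 = m
      · rcases hx with hs | hs <;> simp [hxm, hs] <;> omega
      · simp [hxm]; omega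

lemma exists_min : ∀ (l : List Letter), l ≠ [] →
    ∃ m, (∃ x ∈ l, x.1 = m) ∧ ∀ x ∈ l, m ≤ x.1 := by
  intro l
  induction l with
  | nil => intro h; exact absurd rfl h
  | cons x t ih =>
      intro _
      rcases eq_or_ne t [] with rfl | hne
      · exact ⟨x.1, ⟨x, by simp⟩, by simp⟩
      · obtain ⟨m', ⟨y, hy, hym⟩, hmin⟩ := ih hne
        rcases le_total x.1 m' with hle | hle
        · exact ⟨x.1, ⟨x, by simp⟩, by
            intro z hz
            rcases List.mem_cons.mp hz with rfl | hz
            · exact le_refl _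
            · exact le_trans hle (hmin z hz)⟩
        · exact ⟨m', ⟨y, List.mem_cons_of_mem _ hy, hym⟩, by
            intro z hz
            rcases List.mem_cons.mp hz with rfl | hz
            · exact hle
            · exact hmin z hz⟩

theorem main : ∀ (n : ℕ) (l : List Letter), l.length ≤ n → l ≠ [] →
    (∀ x ∈ l, x.2 = 1 ∨ x.2 = -1) → List.Chain' step l → Ψ l ≠ 1 := by
  intro n
  induction n with
  | zero =>
      intro l hlen hne _ _
      exact absurd (List.length_eq_zero_iff.mp (Nat.le_zero.mp hlen)) hne
  | succ n ih =>
      intro l hlen hne hsigns hchain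
      obtain ⟨m, ⟨x₀, hx₀, hx₀m⟩, hmin⟩ := exists_min l hne
      have hboth : ∀ x ∈ l, m ≤ x.1 ∧ (x.2 = 1 ∨ x.2 = -1) :=
        fun x hx => ⟨hmin x hx, hsigns x hx⟩
      by_cases hS : Ssum m l = 0
      · -- conjugation case
        have hpn : posCnt m l = negCnt m l := by
          have := Ssum_eq_counts m l hsigns; omega
        have hcnt1 : 1 ≤ posCnt m l + negCnt m l := by
          rw [cnt_eq m l hsigns]
          have : 0 < l.countP (fun x => x.1 = m) :=
            List.countP_pos_iff.mpr ⟨x₀, hx₀, by simp [hx₀m]⟩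
          omega
        have hclen := core_length m l hsigns
        have hcne : core m l ≠ [] := by
          intro hceq
          rw [hceq] at hclen
          simp at hclen
          -- all letters have index m
          have hall : ∀ x ∈ l, x.1 = m := by
            have : l.countP (fun x => x.1 = m) = l.length := by
              rw [← cnt_eq m l hsigns]; omega
            intro x hx
            have := List.countP_eq_length.mp this x hx
            simpa using this
          -- l has length ≥ 2
          rcases l with _ | ⟨x, _ | ⟨y, t⟩⟩
          · exact hne rfl
          · rcases hsigns x (by simp) with hs | hs <;>
              simp [Ssum, hall x (by simp), hs] at hS
          · have hsxy : step x y := (List.isChain_cons.mp hchain).1 y (by simp)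
            have h1 := hall x (by simp)
            have h2 := hall y (by simp)
            unfold step at hsxy
            omega
        have IH := ih (core m l) (by omega) hcne (core_signs m l hsigns)
          (core_chain m l hboth hchain).1
        intro hl1
        apply IH
        have := alg m l hboth
        rw [hl1] at this
        have h2 : Ψ (core m l) =
            ((fperm m) ^ (posCnt m l))⁻¹ * 1 * ((fperm m) ^ (negCnt m l)) := by
          rw [this, hpn]; group
        rw [h2, hpn]; group
      · -- germ case
        intro hl1
        have hg := germ m l hboth (-(l.length : ℤ)) (by omega)
        rw [hl1] at hg
        simp only [Equiv.Perm.coe_one, id_eq] at hg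
        have h2 : (2:ℚ) ^ (-(l.length:ℤ)) = 2 ^ (-(l.length:ℤ) - Ssum m l) := by
          linarith [hg]
        have := zpow_right_injective₀ (by norm_num : (0:ℚ) < 2) (by norm_num) h2
        omega

lemma chain'_ofFn' {α : Type*} {k : ℕ} (f : Fin k → α) (R : α → α → Prop)
    (h : ∀ (i : ℕ) (h1 : i < k) (h2 : i + 1 < k), R (f ⟨i, h1⟩) (f ⟨i+1, h2⟩)) :
    List.Chain' R (List.ofFn f) := by
  unfold List.Chain'
  rw [List.isChain_iff_getElem]
  intro i hi
  have hi2 : i < (List.ofFn f).length - 1 := by omega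
  rw [List.length_ofFn] at hi2
  have hi' : i + 1 < k := by omega
  simp only [List.getElem_ofFn, Fin.cast_mk]
  exact h i (by omega) hi'

lemma rels_hold : ∀ rr ∈ ThompsonRels, FreeGroup.lift fperm rr = 1 := by
  rintro rr ⟨i, j, hij, rfl⟩
  simp only [map_mul, map_inv, FreeGroup.lift_apply_of]
  rw [frel hij]
  simp

noncomputable def Φ : ThompsonF →* Equiv.Perm ℚ := PresentedGroup.toGroup rels_hold

lemma Φ_of (i : ℕ) : Φ (xF i) = fperm i := PresentedGroup.toGroup.of rels_hold

end ThompsonAux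

/-- If `w = a_1 ⋯ a_k` is a nonempty word in which each letter `a_s` is `x_{r_s}` or
`x_{r_s}⁻¹`, and consecutive indices differ by exactly one, then `w` represents a
nontrivial element of Thompson's group `F`. -/
theorem nontrivial_of_consecutive_indices (k : ℕ) (hk : 1 ≤ k)
    (r : Fin k → ℕ) (ε : Fin k → ℤ) (hε : ∀ s : Fin k, ε s = 1 ∨ ε s = -1)
    (hstep : ∀ (s : Fin k) (h : (s : ℕ) + 1 < k),
      r ⟨(s : ℕ) + 1, h⟩ = r s + 1 ∨ r ⟨(s : ℕ) + 1, h⟩ + 1 = r s) :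
    (List.ofFn (fun s : Fin k => xF (r s) ^ ε s)).prod ≠ 1 := by
  intro h1
  set l : List ThompsonAux.Letter := List.ofFn (fun s => (r s, ε s)) with hl
  have hlen : l.length = k := by simp [hl]
  have hne : l ≠ [] := by
    intro h; rw [h] at hlen; simp at hlen; omega
  have hsigns : ∀ x ∈ l, x.2 = 1 ∨ x.2 = -1 := by
    intro x hx
    rw [hl, List.mem_ofFn] at hx
    obtain ⟨s, rfl⟩ := hx
    exact hε s
  have hchain : List.Chain' ThompsonAux.step l := by
    rw [hl]
    apply ThompsonAux.chain'_ofFn'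
    intro i h1 h2
    unfold ThompsonAux.step
    simpa using hstep ⟨i, h1⟩ h2
  have hΦ : ThompsonAux.Φ ((List.ofFn fun s : Fin k => xF (r s) ^ ε s).prod)
      = ThompsonAux.Ψ l := by
    rw [map_list_prod]
    unfold ThompsonAux.Ψ
    rw [hl, List.map_ofFn, List.map_ofFn]
    have hfun : (⇑ThompsonAux.Φ ∘ fun s : Fin k => xF (r s) ^ ε s)
        = ((fun x : ThompsonAux.Letter => ThompsonAux.fperm x.1 ^ x.2) ∘ fun s => (r s, ε s)) := by
      funext s
      simp [Function.comp, map_zpow, ThompsonAux.Φ_of]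
    rw [hfun]
  exact ThompsonAux.main l.length l le_rfl hne hsigns hchain
    (by rw [← hΦ, h1, map_one])
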